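/- For every m ∈ ℕ and every imaginary unit I ∈ ℍ (I² = −1), the function g : ℝ² → ℍ defined by g(u,v) = Q_m(u + vI) satisfies ∂̄_I^{m+1} g = 0, where ∂̄_I g = (1/2)(∂g/∂u + I·∂g/∂v); that is, Q_m is slice polyanalytic of order m+1. -/

import Mathlib

open Quaternion

noncomputable section

/-- The quaternion unit `e₁`. -/
def e1 : ℍ[ℝ] := ⟨0, 1, 0, 0⟩

/-- The quaternion unit `e₂`. -/
def e2 : ℍ[ℝ] := ⟨0, 0, 1, 0⟩

/-- The quaternion unit `e₃`. -/
def e3 : ℍ[ℝ] := ⟨0, 0, 0, 1⟩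

/-- The coefficients `T^m_j = 2(m-j+1)/((m+1)(m+2))`. -/
def appellT (m j : ℕ) : ℝ :=
  (2 * ((m : ℝ) - (j : ℝ) + 1)) / (((m : ℝ) + 1) * ((m : ℝ) + 2))

/-- The `m`-th quaternionic Appell polynomial
`Q_m(x) = Σ_{j=0}^m T^m_j x^{m-j} x̄^j`. -/
def appellQ (m : ℕ) (x : ℍ[ℝ]) : ℍ[ℝ] :=
  ∑ j ∈ Finset.range (m + 1), appellT m j • (x ^ (m - j) * (star x) ^ j)

/-- The slice Cauchy–Riemann operator
`∂̄_I g = (1/2)(∂g/∂u + I ∂g/∂v)` acting on functions of two real variables. -/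
def sliceDBar (I : ℍ[ℝ]) (g : ℝ → ℝ → ℍ[ℝ]) : ℝ → ℝ → ℍ[ℝ] :=
  fun u v => (1 / 2 : ℝ) • (deriv (fun t => g t v) u + I * deriv (fun t => g u t) v)

/-! ### Auxiliary material -/

/-- Basic monomial building block `(u+vI)^a (u-vI)^b`. -/
def Bm (I : ℍ[ℝ]) (a b : ℕ) (u v : ℝ) : ℍ[ℝ] :=
  ((u : ℍ[ℝ]) + v • I) ^ a * ((u : ℍ[ℝ]) - v • I) ^ b

lemma re_eq_zero_of_sq_eq_neg_one {I : ℍ[ℝ]} (hI : I ^ 2 = -1) : I.re = 0 := by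
  rw [sq] at hI
  have h1 := congrArg QuaternionAlgebra.re hI
  have h2 := congrArg QuaternionAlgebra.imI hI
  have h3 := congrArg QuaternionAlgebra.imJ hI
  have h4 := congrArg QuaternionAlgebra.imK hI
  simp [Quaternion.re_mul, Quaternion.imI_mul, Quaternion.imJ_mul, Quaternion.imK_mul] at h1 h2 h3 h4
  nlinarith [sq_nonneg I.re, sq_nonneg I.imI, sq_nonneg I.imJ, sq_nonneg I.imK]

lemma hasDerivAt_coe_quat (s : ℝ) : HasDerivAt (fun t : ℝ => (t : ℍ[ℝ])) 1 s := by
  have h : HasDerivAt (fun t : ℝ => t • (1 : ℍ[ℝ])) 1 s := by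
    simpa using (hasDerivAt_id s).smul_const (1 : ℍ[ℝ])
  have e : (fun t : ℝ => (t : ℍ[ℝ])) = fun t : ℝ => t • (1 : ℍ[ℝ]) := by
    funext t
    ext <;> simp
  rw [e]
  exact h

/-- Derivative of a power of a function commuting with its (constant) derivative. -/
lemma hasDerivAt_pow_of_commute (f : ℝ → ℍ[ℝ]) (c : ℍ[ℝ]) (s : ℝ)
    (hf : HasDerivAt f c s) (hc : Commute (f s) c) (n : ℕ) :
    HasDerivAt (fun t => f t ^ n) ((n : ℝ) • (f s ^ (n - 1) * c)) s := by
  induction n with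
  | zero => simpa using hasDerivAt_const s (1 : ℍ[ℝ])
  | succ n ih =>
    have h := ih.fun_mul hf
    have heq : ((n : ℝ) • (f s ^ (n - 1) * c)) * f s + f s ^ n * c
        = ((n + 1 : ℕ) : ℝ) • (f s ^ (n + 1 - 1) * c) := by
      cases n with
      | zero => simp
      | succ k =>
        have h1 : f s ^ k * c * f s = f s ^ (k + 1) * c := by
          rw [mul_assoc, ← hc.eq, ← mul_assoc, ← pow_succ]
        rw [Nat.succ_sub_one, Nat.succ_sub_one, smul_mul_assoc, h1]
        push_cast
        module
    have hfun : (fun t => f t ^ n * f t) = fun t => f t ^ (n + 1) := by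
      funext t; rw [← pow_succ]
    rw [hfun, heq] at h
    exact h

/-- Key algebraic cancellation. -/
lemma key_alg (z w I : ℍ[ℝ]) (hz : Commute z I) (hw : Commute w I) (hI : I ^ 2 = -1)
    (a b : ℕ) (c : ℝ) :
    (1 / 2 : ℝ) • (c • (((a : ℝ) • (z ^ (a - 1) * 1)) * w ^ b
        + z ^ a * ((b : ℝ) • (w ^ (b - 1) * 1)))
      + I * (c • (((a : ℝ) • (z ^ (a - 1) * I)) * w ^ b
        + z ^ a * ((b : ℝ) • (w ^ (b - 1) * -I)))))
      = (c * (b : ℝ)) • (z ^ a * w ^ (b - 1)) := by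
  have hII : I * I = -1 := by rw [← sq, hI]
  have swz : ∀ (k : ℕ) (x : ℍ[ℝ]), I * (z ^ k * x) = z ^ k * (I * x) := fun k x => by
    rw [← mul_assoc, (hz.symm.pow_right k).eq, mul_assoc]
  have sww : ∀ (k : ℕ) (x : ℍ[ℝ]), I * (w ^ k * x) = w ^ k * (I * x) := fun k x => by
    rw [← mul_assoc, (hw.symm.pow_right k).eq, mul_assoc]
  have swz' : ∀ (k : ℕ), I * z ^ k = z ^ k * I := fun k => (hz.symm.pow_right k).eq
  have sww' : ∀ (k : ℕ), I * w ^ k = w ^ k * I := fun k => (hw.symm.pow_right k).eq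
  have hIIx : ∀ x : ℍ[ℝ], I * (I * x) = -x := fun x => by
    rw [← mul_assoc, hII, neg_one_mul]
  have hInI : I * -I = 1 := by rw [mul_neg, hII, neg_neg]
  simp only [mul_one, smul_add, mul_add, smul_mul_assoc, mul_smul_comm, smul_smul,
    mul_assoc, swz, sww, swz', sww', hIIx, hInI, hII, mul_neg, neg_mul, mul_neg_one, neg_neg]
  match_scalars <;> ring

/-- One application of the slice CR operator to a linear combination of monomials. -/
lemma sliceDBar_sum (I : ℍ[ℝ]) (hI : I ^ 2 = -1) (n : ℕ) (c : ℕ → ℝ) (a b : ℕ → ℕ) :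
    sliceDBar I (fun u v => ∑ j ∈ Finset.range n, c j • Bm I (a j) (b j) u v)
      = fun u v => ∑ j ∈ Finset.range n, (c j * (b j : ℝ)) • Bm I (a j) (b j - 1) u v := by
  funext u v
  set z : ℍ[ℝ] := (u : ℍ[ℝ]) + v • I with hzdef
  set w : ℍ[ℝ] := (u : ℍ[ℝ]) - v • I with hwdef
  have hz : Commute z I := (Quaternion.coe_commute u I).add_left ((Commute.refl I).smul_left v)
  have hw : Commute w I := (Quaternion.coe_commute u I).sub_left ((Commute.refl I).smul_left v)
  -- derivatives in the first variable
  have hz_u : HasDerivAt (fun t : ℝ => (t : ℍ[ℝ]) + v • I) 1 u :=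
    (hasDerivAt_coe_quat u).add_const _
  have hw_u : HasDerivAt (fun t : ℝ => (t : ℍ[ℝ]) - v • I) 1 u :=
    (hasDerivAt_coe_quat u).sub_const _
  have hz_v : HasDerivAt (fun t : ℝ => (u : ℍ[ℝ]) + t • I) I v := by
    simpa using ((hasDerivAt_id v).smul_const I).const_add ((u : ℍ[ℝ]))
  have hw_v : HasDerivAt (fun t : ℝ => (u : ℍ[ℝ]) - t • I) (-I) v := by
    simpa using ((hasDerivAt_id v).smul_const I).const_sub ((u : ℍ[ℝ]))
  have hDu : ∀ j, HasDerivAt (fun t => Bm I (a j) (b j) t v)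
      (((a j : ℝ) • (z ^ (a j - 1) * 1)) * w ^ (b j)
        + z ^ (a j) * ((b j : ℝ) • (w ^ (b j - 1) * 1))) u := by
    intro j
    exact (hasDerivAt_pow_of_commute _ 1 u hz_u (Commute.one_right z) (a j)).mul
      (hasDerivAt_pow_of_commute _ 1 u hw_u (Commute.one_right w) (b j))
  have hDv : ∀ j, HasDerivAt (fun t => Bm I (a j) (b j) u t)
      (((a j : ℝ) • (z ^ (a j - 1) * I)) * w ^ (b j)
        + z ^ (a j) * ((b j : ℝ) • (w ^ (b j - 1) * -I))) v := by
    intro j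
    exact (hasDerivAt_pow_of_commute _ I v hz_v hz (a j)).mul
      (hasDerivAt_pow_of_commute _ (-I) v hw_v (hw.neg_right) (b j))
  have hSu : HasDerivAt (fun t => ∑ j ∈ Finset.range n, c j • Bm I (a j) (b j) t v)
      (∑ j ∈ Finset.range n, c j • (((a j : ℝ) • (z ^ (a j - 1) * 1)) * w ^ (b j)
        + z ^ (a j) * ((b j : ℝ) • (w ^ (b j - 1) * 1)))) u :=
    HasDerivAt.fun_sum fun j _ => (hDu j).const_smul (c j)
  have hSv : HasDerivAt (fun t => ∑ j ∈ Finset.range n, c j • Bm I (a j) (b j) u t)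
      (∑ j ∈ Finset.range n, c j • (((a j : ℝ) • (z ^ (a j - 1) * I)) * w ^ (b j)
        + z ^ (a j) * ((b j : ℝ) • (w ^ (b j - 1) * -I)))) v :=
    HasDerivAt.fun_sum fun j _ => (hDv j).const_smul (c j)
  show (1 / 2 : ℝ) • (deriv (fun t => ∑ j ∈ Finset.range n, c j • Bm I (a j) (b j) t v) u
      + I * deriv (fun t => ∑ j ∈ Finset.range n, c j • Bm I (a j) (b j) u t) v) = _
  rw [hSu.deriv, hSv.deriv, Finset.mul_sum, ← Finset.sum_add_distrib, Finset.smul_sum]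
  refine Finset.sum_congr rfl fun j _ => ?_
  exact key_alg z w I hz hw hI (a j) (b j) (c j)

lemma descFactorial_succ' (n k : ℕ) :
    n.descFactorial (k + 1) = n * (n - 1).descFactorial k := by
  cases n with
  | zero => simp [Nat.zero_descFactorial_succ]
  | succ n => exact Nat.succ_descFactorial_succ n k

/-- Iterates of the slice CR operator on linear combinations of monomials. -/
lemma iter_sliceDBar_sum (I : ℍ[ℝ]) (hI : I ^ 2 = -1) (n k : ℕ) (c : ℕ → ℝ) (a b : ℕ → ℕ) :
    (sliceDBar I)^[k] (fun u v => ∑ j ∈ Finset.range n, c j • Bm I (a j) (b j) u v)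
      = fun u v => ∑ j ∈ Finset.range n,
          (c j * (((b j).descFactorial k : ℕ) : ℝ)) • Bm I (a j) (b j - k) u v := by
  induction k generalizing c b with
  | zero => simp
  | succ k ih =>
    rw [Function.iterate_succ_apply, sliceDBar_sum I hI n c a b,
      ih (fun j => c j * (b j : ℝ)) (fun j => b j - 1)]
    funext u v
    refine Finset.sum_congr rfl fun j _ => ?_
    have hb : b j - 1 - k = b j - (k + 1) := by omega
    rw [hb, descFactorial_succ']
    congr 1
    push_cast
    ring

theorem appellQ_slice_polyanalytic (m : ℕ) (I : ℍ[ℝ]) (hI : I ^ 2 = -1) (u v : ℝ) :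
    (sliceDBar I)^[m + 1] (fun u v => appellQ m ((u : ℍ[ℝ]) + v • I)) u v = 0 := by
  have hre : I.re = 0 := re_eq_zero_of_sq_eq_neg_one hI
  have hstarI : star I = -I := Quaternion.star_eq_neg.mpr hre
  have hfun : (fun u v : ℝ => appellQ m ((u : ℍ[ℝ]) + v • I))
      = fun u v => ∑ j ∈ Finset.range (m + 1),
          appellT m j • Bm I (m - j) j u v := by
    funext u v
    have hstar : star ((u : ℍ[ℝ]) + v • I) = (u : ℍ[ℝ]) - v • I := by
      rw [star_add, Quaternion.star_smul, hstarI]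
      simp [sub_eq_add_neg, smul_neg]
    simp only [appellQ, hstar, Bm]
  rw [hfun, iter_sliceDBar_sum I hI (m + 1) (m + 1) (appellT m) (fun j => m - j) (fun j => j)]
  refine Finset.sum_eq_zero fun j hj => ?_
  have : j.descFactorial (m + 1) = 0 :=
    Nat.descFactorial_eq_zero_iff_lt.mpr (Finset.mem_range.mp hj)
  simp only [this, Nat.cast_zero, mul_zero, zero_smul]
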